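/- For a linear operator L on a 2-dimensional vector space with det(L) = 0, the exponential-type series Σ_{k≥0} L^k/(k+1)! equals Id + f(tr L)·L, where f(x) = (e^x - x - 1)/x² (extended analytically by f(0) = 1/2). -/

import Mathlib

open scoped Nat

lemma matrix_sq_of_det_zero (M : Matrix (Fin 2) (Fin 2) ℝ) (h : M.det = 0) :
    M * M = M.trace • M := by
  rw [Matrix.det_fin_two] at h
  ext i j
  rw [Matrix.trace_fin_two]
  fin_cases i <;> fin_cases j <;>
    simp [Matrix.mul_apply, Fin.sum_univ_two] <;> linarith [h]

set_option synthInstance.maxHeartbeats 1000000 in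
theorem dexp_series_of_det_zero {V : Type*} [NormedAddCommGroup V] [NormedSpace ℝ V]
    [FiniteDimensional ℝ V] (hdim : Module.finrank ℝ V = 2)
    (L : V →L[ℝ] V) (hdet : LinearMap.det (L : V →ₗ[ℝ] V) = 0) :
    ∑' k : ℕ, (((k + 1).factorial : ℝ)⁻¹) • L ^ k =
      ContinuousLinearMap.id ℝ V +
        (if LinearMap.trace ℝ V (L : V →ₗ[ℝ] V) = 0 then (1 / 2 : ℝ)
          else (Real.exp (LinearMap.trace ℝ V (L : V →ₗ[ℝ] V))
              - LinearMap.trace ℝ V (L : V →ₗ[ℝ] V) - 1)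
            / (LinearMap.trace ℝ V (L : V →ₗ[ℝ] V)) ^ 2) • L := by
  set t : ℝ := LinearMap.trace ℝ V (L : V →ₗ[ℝ] V) with ht
  -- Step 1 : L * L = t • L
  have b : Module.Basis (Fin 2) ℝ V := Module.finBasisOfFinrankEq ℝ V hdim
  have hL2 : L * L = t • L := by
    have hmat : LinearMap.toMatrix b b (L : V →ₗ[ℝ] V) *
        LinearMap.toMatrix b b (L : V →ₗ[ℝ] V) =
        (LinearMap.toMatrix b b (L : V →ₗ[ℝ] V)).trace •
          LinearMap.toMatrix b b (L : V →ₗ[ℝ] V) :=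
      matrix_sq_of_det_zero _ (by rw [LinearMap.det_toMatrix]; exact hdet)
    have htr : (LinearMap.toMatrix b b (L : V →ₗ[ℝ] V)).trace = t := by
      rw [ht, LinearMap.trace_eq_matrix_trace ℝ b]
    rw [htr] at hmat
    have hlin : (L : V →ₗ[ℝ] V) * (L : V →ₗ[ℝ] V) = t • (L : V →ₗ[ℝ] V) := by
      apply (LinearMap.toMatrix b b).injective
      rw [LinearMap.toMatrix_mul, _root_.map_smul, hmat]
    ext x
    have := LinearMap.congr_fun hlin x
    simpa using this
  -- Step 2: powers
  have hpow : ∀ k : ℕ, L ^ (k + 1) = t ^ k • L := by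
    intro k
    induction k with
    | zero => simp
    | succ n ih =>
      rw [pow_succ, ih]
      rw [show (t ^ n • L) * L = t ^ n • (L * L) from smul_mul_assoc _ _ _, hL2,
        smul_smul, ← pow_succ]
  -- coefficient series
  have hc : Summable (fun k : ℕ => t ^ k / (k + 2)! : ℕ → ℝ) := by
    apply Summable.of_norm_bounded (Real.summable_pow_div_factorial |t|)
    intro k
    rw [Real.norm_eq_abs, abs_div, abs_pow, abs_of_nonneg (by positivity : (0:ℝ) ≤ ((k+2)! : ℝ))]
    apply div_le_div_of_nonneg_left (by positivity) (by positivity)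
    exact_mod_cast Nat.factorial_le (by omega)
  -- the term function
  set f : ℕ → (V →L[ℝ] V) := fun k => (((k + 1).factorial : ℝ)⁻¹) • L ^ k with hf
  have hfsucc : ∀ k : ℕ, f (k + 1) = (t ^ k / (k + 2)!) • L := by
    intro k
    rw [hf]
    simp only [hpow k, smul_smul]
    rw [show k + 1 + 1 = k + 2 from rfl, div_eq_inv_mul]
  have hsum : Summable f := by
    rw [← summable_nat_add_iff 1]
    simp only [hfsucc]
    exact hc.smul_const L
  have hS : ∑' k : ℕ, f k = f 0 + (∑' k : ℕ, t ^ k / (k + 2)!) • L := by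
    rw [Summable.tsum_eq_zero_add hsum]
    congr 1
    simp only [hfsucc]
    exact Summable.tsum_smul_const hc L
  have hf0 : f 0 = ContinuousLinearMap.id ℝ V := by
    simp [hf, ContinuousLinearMap.one_def]
  -- evaluate the scalar sum
  have hval : (∑' k : ℕ, t ^ k / (k + 2)! : ℝ) =
      (if t = 0 then (1 / 2 : ℝ) else (Real.exp t - t - 1) / t ^ 2) := by
    by_cases h0 : t = 0
    · rw [if_pos h0, h0]
      rw [tsum_eq_single 0 (by intro k hk; simp [zero_pow hk])]
      norm_num
    · rw [if_neg h0]
      have hexp : Real.exp t = ∑' n : ℕ, t ^ n / n ! := by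
        rw [Real.exp_eq_exp_ℝ, NormedSpace.exp_eq_tsum_div]
      have hfull := Real.summable_pow_div_factorial t
      have h1 : (∑' n : ℕ, t ^ n / n !) = 1 + ∑' n : ℕ, t ^ (n + 1) / (n + 1)! := by
        rw [Summable.tsum_eq_zero_add hfull]; norm_num
      have hfull1 : Summable (fun n : ℕ => t ^ (n + 1) / (n + 1)! : ℕ → ℝ) := by
        exact ((summable_nat_add_iff 1).mpr hfull :)
      have h2 : (∑' n : ℕ, t ^ (n + 1) / (n + 1)!) = t + ∑' n : ℕ, t ^ (n + 2) / (n + 2)! := by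
        rw [Summable.tsum_eq_zero_add hfull1]; norm_num
      have h3 : (∑' n : ℕ, t ^ (n + 2) / (n + 2)! : ℝ) = t ^ 2 * ∑' k : ℕ, t ^ k / (k + 2)! := by
        rw [← tsum_mul_left]
        congr 1; ext n; rw [pow_add]; ring
      have ht2 : (t : ℝ) ^ 2 ≠ 0 := pow_ne_zero 2 h0
      field_simp
      rw [hexp, h1, h2, h3]
      ring
  rw [hS, hf0, hval]
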